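/- arXiv:1411.1833 — 3 statements merged into one kernel-verified Lean document; each statement's English description precedes it below -/
import Mathlib

section
/- Let $a_{ni} \in [0,1)$ for $i \ge 1, n \ge 1$ with $\sup_{n,i} a_{ni} < 1$. Suppose for each $i$, $a_i := \lim_{n\to\infty} a_{ni}$ exists, that $c_n := \sum_{i=1}^\infty a_{ni} < \infty$ for each $n$, that $c := \sum_{i=1}^\infty a_i < \infty$, and $\lim_{n\to\infty} c_n = c$. Then $\lim_{n\to\infty} \prod_{i=1}^\infty (1 - a_{ni}) = \prod_{i=1}^\infty (1 - a_i)$. -/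
open Filter Topology

set_option maxHeartbeats 1000000 in
theorem stmt_0 (a : ℕ → ℕ → ℝ) (l : ℕ → ℝ)
    (hmem : ∀ n i, a n i ∈ Set.Ico (0:ℝ) 1)
    (hsup : ∃ b < (1:ℝ), ∀ n i, a n i ≤ b)
    (hlim : ∀ i, Tendsto (fun n => a n i) atTop (𝓝 (l i)))
    (hsummn : ∀ n, Summable (fun i => a n i))
    (hsuml : Summable l)
    (hc : Tendsto (fun n => ∑' i, a n i) atTop (𝓝 (∑' i, l i))) :
    Tendsto (fun n => ∏' i, (1 - a n i)) atTop (𝓝 (∏' i, (1 - l i))) := by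
  obtain ⟨b, hb1, hab⟩ := hsup
  have hb0 : (0:ℝ) ≤ b := le_trans (hmem 0 0).1 (hab 0 0)
  have ha0 : ∀ n i, 0 ≤ a n i := fun n i => (hmem n i).1
  have hl0 : ∀ i, 0 ≤ l i := fun i =>
    le_of_tendsto_of_tendsto' tendsto_const_nhds (hlim i) (fun n => ha0 n i)
  have hlb : ∀ i, l i ≤ b := fun i =>
    le_of_tendsto (hlim i) (Eventually.of_forall fun n => hab n i)
  have h1b : (0:ℝ) < 1 - b := by linarith
  -- Lipschitz bound for log(1-·) on [0,b]
  have key : ∀ x y : ℝ, 0 ≤ x → x ≤ b → 0 ≤ y → y ≤ b →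
      |Real.log (1 - x) - Real.log (1 - y)| ≤ |x - y| / (1 - b) := by
    have main : ∀ x y : ℝ, 0 ≤ x → x ≤ b → 0 ≤ y → y ≤ b → y ≤ x →
        Real.log (1 - y) - Real.log (1 - x) ≤ (x - y) / (1 - b) := by
      intro x y hx hxb hy hyb hyx
      have hx1 : (0:ℝ) < 1 - x := by linarith
      have hy1 : (0:ℝ) < 1 - y := by linarith
      have := Real.log_le_sub_one_of_pos (x := (1 - y) / (1 - x)) (by positivity)
      rw [Real.log_div (by linarith) (by linarith)] at this
      have h2 : (1 - y) / (1 - x) - 1 = (x - y) / (1 - x) := by field_simp; ring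
      rw [h2] at this
      refine this.trans (div_le_div_of_nonneg_left (by linarith) h1b (by linarith))
    intro x y hx hxb hy hyb
    rcases le_total y x with h | h
    · have hmono : Real.log (1 - x) ≤ Real.log (1 - y) :=
        Real.log_le_log (by linarith) (by linarith)
      rw [abs_of_nonpos (by linarith), abs_of_nonneg (by linarith)]
      have := main x y hx hxb hy hyb h
      linarith
    · have hmono : Real.log (1 - y) ≤ Real.log (1 - x) :=
        Real.log_le_log (by linarith) (by linarith)
      rw [abs_of_nonneg (by linarith), abs_of_nonpos (by linarith)]
      have := main y x hy hyb hx hxb h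
      have h2 : -(x - y) / (1 - b) = (y - x) / (1 - b) := by ring
      rw [h2]
      linarith
  have logbound : ∀ x : ℝ, 0 ≤ x → x ≤ b → |Real.log (1 - x)| ≤ x / (1 - b) := by
    intro x hx hxb
    have := key x 0 hx hxb le_rfl hb0
    rw [sub_zero, sub_zero, abs_of_nonneg hx] at this
    simpa using this
  -- summability of log series
  have hsumlogn : ∀ n, Summable (fun i => Real.log (1 - a n i)) := by
    intro n
    refine ((hsummn n).div_const (1 - b)).of_norm_bounded ?_
    intro i; exact logbound _ (ha0 n i) (hab n i)
  have hsumlogl : Summable (fun i => Real.log (1 - l i)) := by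
    refine (hsuml.div_const (1 - b)).of_norm_bounded ?_
    intro i; exact logbound _ (hl0 i) (hlb i)
  -- ∑' min(a n i, l i) → ∑' l i by dominated convergence
  have hmin : Tendsto (fun n => ∑' i, min (a n i) (l i)) atTop (𝓝 (∑' i, l i)) := by
    have : Tendsto (fun n => ∑' i, min (a n i) (l i)) atTop (𝓝 (∑' i, min (l i) (l i))) := by
      refine tendsto_tsum_of_dominated_convergence (bound := l) hsuml
        (fun i => (Tendsto.min (hlim i) tendsto_const_nhds)) ?_
      refine Eventually.of_forall fun n i => ?_
      rw [Real.norm_eq_abs, abs_of_nonneg (le_min (ha0 n i) (hl0 i))]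
      exact min_le_right _ _
    simpa using this
  have hsummin : ∀ n, Summable (fun i => min (a n i) (l i)) := by
    intro n
    exact hsuml.of_nonneg_of_le (fun i => le_min (ha0 n i) (hl0 i)) (fun i => min_le_right _ _)
  -- ∑' |a n i - l i| → 0
  have habs : ∀ n, Summable (fun i => |a n i - l i|) := by
    intro n
    have : (fun i => |a n i - l i|) = fun i => a n i + l i - 2 * min (a n i) (l i) := by
      ext i; rcases le_total (a n i) (l i) with h | h
      · rw [abs_of_nonpos (by linarith), min_eq_left h]; ring
      · rw [abs_of_nonneg (by linarith), min_eq_right h]; ring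
    rw [this]
    exact ((hsummn n).add hsuml).sub ((hsummin n).mul_left 2)
  have hD : Tendsto (fun n => ∑' i, |a n i - l i|) atTop (𝓝 0) := by
    have heq : ∀ n, ∑' i, |a n i - l i|
        = (∑' i, a n i) + (∑' i, l i) - 2 * ∑' i, min (a n i) (l i) := by
      intro n
      have : (fun i => |a n i - l i|) = fun i => a n i + l i - 2 * min (a n i) (l i) := by
        ext i; rcases le_total (a n i) (l i) with h | h
        · rw [abs_of_nonpos (by linarith), min_eq_left h]; ring
        · rw [abs_of_nonneg (by linarith), min_eq_right h]; ring
      rw [this, Summable.tsum_sub ((hsummn n).add hsuml) ((hsummin n).mul_left 2),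
        Summable.tsum_add (hsummn n) hsuml, tsum_mul_left]
    simp only [heq]
    have h2 : Tendsto (fun n => (∑' i, a n i) + (∑' i, l i) - 2 * ∑' i, min (a n i) (l i))
        atTop (𝓝 ((∑' i, l i) + (∑' i, l i) - 2 * ∑' i, l i)) :=
      (hc.add tendsto_const_nhds).sub (hmin.const_mul 2)
    have h3 : (∑' i, l i) + (∑' i, l i) - 2 * ∑' i, l i = 0 := by ring
    exact h3 ▸ h2
  -- ∑' log(1 - a n i) → ∑' log(1 - l i)
  have hlog : Tendsto (fun n => ∑' i, Real.log (1 - a n i)) atTop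
      (𝓝 (∑' i, Real.log (1 - l i))) := by
    have hbound : ∀ n, |(∑' i, Real.log (1 - a n i)) - ∑' i, Real.log (1 - l i)|
        ≤ (∑' i, |a n i - l i|) / (1 - b) := by
      intro n
      have hsub : Summable (fun i => Real.log (1 - a n i) - Real.log (1 - l i)) :=
        (hsumlogn n).sub hsumlogl
      have habs2 : Summable (fun i => |Real.log (1 - a n i) - Real.log (1 - l i)|) := hsub.abs
      have h1 : |∑' i, (Real.log (1 - a n i) - Real.log (1 - l i))|
          ≤ ∑' i, |Real.log (1 - a n i) - Real.log (1 - l i)| := by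
        have := norm_tsum_le_tsum_norm
          (f := fun i => Real.log (1 - a n i) - Real.log (1 - l i))
          (by simpa [Real.norm_eq_abs] using habs2)
        simpa [Real.norm_eq_abs] using this
      have h2 : ∑' i, |Real.log (1 - a n i) - Real.log (1 - l i)|
          ≤ ∑' i, |a n i - l i| / (1 - b) :=
        Summable.tsum_le_tsum (fun i => key _ _ (ha0 n i) (hab n i) (hl0 i) (hlb i)) habs2
          ((habs n).div_const _)
      rw [← Summable.tsum_sub (hsumlogn n) hsumlogl, ← tsum_div_const]
      exact h1.trans h2
    have h0 : Tendsto (fun n => (∑' i, |a n i - l i|) / (1 - b)) atTop (𝓝 0) := by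
      simpa using hD.div_const (1 - b)
    have hsq := squeeze_zero (fun n => abs_nonneg _) hbound h0
    exact tendsto_sub_nhds_zero_iff.mp ((tendsto_zero_iff_abs_tendsto_zero _).mpr hsq)
  -- convert tprod to exp of tsum
  have hpos : ∀ n i, (0:ℝ) < 1 - a n i := fun n i => by
    have := (hmem n i).2; linarith
  have hlpos : ∀ i, (0:ℝ) < 1 - l i := fun i => by have := hlb i; linarith
  have heqn : ∀ n, ∏' i, (1 - a n i) = Real.exp (∑' i, Real.log (1 - a n i)) := by
    intro n
    have := Real.rexp_tsum_eq_tprod (f := fun i => 1 - a n i)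
      (fun i => hpos n i) (hsumlogn n)
    simpa using this.symm
  have heql : ∏' i, (1 - l i) = Real.exp (∑' i, Real.log (1 - l i)) := by
    have := Real.rexp_tsum_eq_tprod (f := fun i => 1 - l i)
      (fun i => hlpos i) hsumlogl
    simpa using this.symm
  simp only [heqn, heql]
  exact (Real.continuous_exp.continuousAt.tendsto).comp hlog
end

section
/- Define $H_k(x) = e^{-x}\sum_{j=0}^{k-1} x^j/j!$ and $H(x) = \prod_{k=1}^\infty H_k(x^{-2})$ for $x > 0$. Then $1 - H(x) \sim x^{-2}$ as $x \to +\infty$, i.e., $\lim_{x\to\infty} x^2 (1 - H(x)) = 1$. -/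
open Filter Topology

noncomputable def H (k : ℕ) (x : ℝ) : ℝ :=
  Real.exp (-x) * ∑ j ∈ Finset.range k, x ^ j / (Nat.factorial j : ℝ)

lemma H_nonneg (k : ℕ) {t : ℝ} (ht : 0 ≤ t) : 0 ≤ H k t := by
  apply mul_nonneg (Real.exp_pos _).le
  exact Finset.sum_nonneg fun j _ => div_nonneg (pow_nonneg ht _) (Nat.cast_nonneg _)

lemma H_le_one (k : ℕ) {t : ℝ} (ht : 0 ≤ t) : H k t ≤ 1 := by
  have h := Real.sum_le_exp_of_nonneg ht k
  have : H k t ≤ Real.exp (-t) * Real.exp t := by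
    unfold H
    exact mul_le_mul_of_nonneg_left h (Real.exp_pos _).le
  simpa [← Real.exp_add] using this

lemma H_tail {t : ℝ} (ht0 : 0 ≤ t) (ht1 : t ≤ 1) {m : ℕ} (hm : 1 ≤ m) :
    1 - H m t ≤ 2 * t ^ m := by
  have hb := Real.exp_bound' ht0 ht1 (n := m) hm
  have hfac : (1 : ℝ) ≤ (Nat.factorial m : ℝ) := by exact_mod_cast Nat.factorial_pos m
  have hmr : (1 : ℝ) ≤ (m : ℝ) := by exact_mod_cast hm
  have hcoef : t ^ m * (↑m + 1) / (↑(Nat.factorial m) * ↑m) ≤ 2 * t ^ m := by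
    rw [div_le_iff₀ (by positivity)]
    have h1 : (m : ℝ) + 1 ≤ 2 * m := by linarith
    have h2 : (2 : ℝ) * m ≤ 2 * ((Nat.factorial m : ℝ) * m) := by nlinarith
    nlinarith [pow_nonneg ht0 m]
  have key : Real.exp t ≤ (∑ j ∈ Finset.range m, t ^ j / (Nat.factorial j : ℝ)) + 2 * t ^ m :=
    le_trans hb (by linarith)
  have hexp : Real.exp (-t) ≤ 1 := by
    rw [Real.exp_le_one_iff]; linarith
  have : 1 - H m t = Real.exp (-t) * (Real.exp t - ∑ j ∈ Finset.range m, t ^ j /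
      (Nat.factorial j : ℝ)) := by
    unfold H; rw [mul_sub, ← Real.exp_add]; ring_nf; rw [Real.exp_zero]; ring
  rw [this]
  calc Real.exp (-t) * (Real.exp t - ∑ j ∈ Finset.range m, t ^ j / (Nat.factorial j : ℝ))
      ≤ 1 * (2 * t ^ m) := by
        apply mul_le_mul hexp (by linarith) ?_ zero_le_one
        have := Real.sum_le_exp_of_nonneg ht0 m
        linarith
    _ = 2 * t ^ m := one_mul _

/-- Weierstrass product inequality. -/
lemma weierstrass (s : Finset ℕ) (f : ℕ → ℝ) (h0 : ∀ i, 0 ≤ f i) (h1 : ∀ i, f i ≤ 1) :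
    1 - ∑ i ∈ s, (1 - f i) ≤ ∏ i ∈ s, f i := by
  induction s using Finset.induction_on with
  | empty => simp
  | insert a s' ha ih =>
    rw [Finset.sum_insert ha, Finset.prod_insert ha]
    have hs : 0 ≤ ∑ i ∈ s', (1 - f i) := Finset.sum_nonneg fun i _ => by linarith [h1 i]
    nlinarith [h0 a, h1 a, mul_le_mul_of_nonneg_left ih (h0 a)]

set_option maxHeartbeats 1000000 in
lemma prod_bounds {t : ℝ} (ht : 0 < t) (ht2 : t ≤ 1/2) :
    Real.exp (-t) - 4 * t ^ 2 ≤ ∏' k : ℕ, H (k + 1) t ∧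
      (∏' k : ℕ, H (k + 1) t) ≤ Real.exp (-t) := by
  have ht1 : t ≤ 1 := by linarith
  have hnn : ∀ k, 0 ≤ H (k + 1) t := fun k => H_nonneg _ ht.le
  have hle1 : ∀ k, H (k + 1) t ≤ 1 := fun k => H_le_one _ ht.le
  set F : Finset ℕ → ℝ := fun s => ∏ k ∈ s, H (k + 1) t with hF
  have hanti : Antitone F := by
    intro s u hsu
    have : F u = (∏ k ∈ u \ s, H (k + 1) t) * F s := (Finset.prod_sdiff hsu).symm
    rw [this]
    calc (∏ k ∈ u \ s, H (k + 1) t) * F s ≤ 1 * F s := by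
          apply mul_le_mul_of_nonneg_right
          · exact Finset.prod_le_one (fun i _ => hnn i) (fun i _ => hle1 i)
          · exact Finset.prod_nonneg fun i _ => hnn i
      _ = F s := one_mul _
  have hbdd : BddBelow (Set.range F) := by
    refine ⟨0, ?_⟩
    rintro x ⟨s, rfl⟩
    exact Finset.prod_nonneg fun i _ => hnn i
  have hprod : HasProd (fun k => H (k + 1) t) (⨅ s, F s) :=
    tendsto_atTop_ciInf hanti hbdd
  rw [hprod.tprod_eq]
  constructor
  · -- lower bound
    apply le_ciInf
    intro s
    have hws := weierstrass s (fun k => H (k + 1) t) hnn hle1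
    -- bound the sum
    set b : ℕ → ℝ := fun k => if k = 0 then 1 - Real.exp (-t) else 2 * t ^ (k + 1) with hb
    have hbnn : ∀ k, 0 ≤ b k := by
      intro k
      by_cases hk : k = 0
      · simp only [hb, hk, if_true]
        simp
        linarith [Real.exp_le_one_iff.mpr (by linarith : -t ≤ 0)]
      · simp only [hb, hk, if_false]
        positivity
    have hble : ∀ k, (1 - H (k + 1) t) ≤ b k := by
      intro k
      by_cases hk : k = 0
      · subst hk
        simp [hb, H, Finset.range_one]
      · simp only [hb, hk, if_false]
        exact H_tail ht.le ht1 (Nat.le_add_left 1 k)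
    have hgeo : Summable (fun k : ℕ => 2 * t ^ k) :=
      (summable_geometric_of_lt_one ht.le (by linarith)).mul_left 2
    have hble2 : ∀ k : ℕ, b k ≤ 2 * t ^ k := by
      intro k
      by_cases hk : k = 0
      · subst hk
        simp only [hb, if_true]
        simp
        linarith [Real.exp_pos (-t)]
      · simp only [hb, hk, if_false]
        have : t ^ (k + 1) ≤ t ^ k := pow_le_pow_of_le_one ht.le ht1 (Nat.le_succ k)
        linarith
    have hbsummable : Summable b := Summable.of_nonneg_of_le hbnn hble2 hgeo
    have hsum_le : ∑ k ∈ s, (1 - H (k + 1) t) ≤ ∑' k, b k := by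
      calc ∑ k ∈ s, (1 - H (k + 1) t) ≤ ∑ k ∈ s, b k :=
            Finset.sum_le_sum fun k _ => hble k
        _ ≤ ∑' k, b k := hbsummable.sum_le_tsum s (fun k _ => hbnn k)
    have htsum : ∑' k, b k ≤ (1 - Real.exp (-t)) + 4 * t ^ 2 := by
      rw [Summable.tsum_eq_zero_add hbsummable]
      have h0 : b 0 = 1 - Real.exp (-t) := by simp [hb]
      have hshift : ∀ k : ℕ, b (k + 1) = 2 * t ^ 2 * t ^ k := by
        intro k; simp only [hb, Nat.succ_ne_zero, if_false]; ring
      rw [h0]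
      have : ∑' k : ℕ, b (k + 1) = 2 * t ^ 2 * (1 - t)⁻¹ := by
        rw [tsum_congr hshift, tsum_mul_left, tsum_geometric_of_lt_one ht.le (by linarith)]
      rw [this]
      have hinv : (1 - t)⁻¹ ≤ 2 := by
        rw [inv_le_comm₀ (by linarith) (by norm_num)]
        linarith
      nlinarith [sq_nonneg t]
    have : F s ≥ 1 - ((1 - Real.exp (-t)) + 4 * t ^ 2) := by
      calc F s ≥ 1 - ∑ k ∈ s, (1 - H (k + 1) t) := hws
        _ ≥ 1 - ((1 - Real.exp (-t)) + 4 * t ^ 2) := by linarith [le_trans hsum_le htsum]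
    linarith
  · -- upper bound
    calc ⨅ s, F s ≤ F {0} := ciInf_le hbdd {0}
      _ = Real.exp (-t) := by simp [hF, H, Finset.range_one]

set_option maxHeartbeats 1000000 in
theorem stmt_4 :
    Tendsto (fun x : ℝ => x ^ 2 * (1 - ∏' k : ℕ, H (k + 1) (x ^ 2)⁻¹)) atTop (𝓝 1) := by
  -- lower and upper comparison functions
  set g : ℝ → ℝ := fun x => x ^ 2 * (1 - Real.exp (-(x ^ 2)⁻¹)) with hg
  have hg1 : Tendsto g atTop (𝓝 1) := by
    have hslope : Tendsto (slope Real.exp 0) (𝓝[≠] (0:ℝ)) (𝓝 1) := by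
      have := hasDerivAt_iff_tendsto_slope.mp (Real.hasDerivAt_exp 0)
      simpa using this
    have hcomp : Tendsto (fun x : ℝ => -(x ^ 2)⁻¹) atTop (𝓝[≠] (0:ℝ)) := by
      apply tendsto_nhdsWithin_of_tendsto_nhds_of_eventually_within
      · have : Tendsto (fun x : ℝ => (x ^ 2)⁻¹) atTop (𝓝 0) :=
          (tendsto_pow_atTop (n := 2) two_ne_zero).inv_tendsto_atTop
        simpa using this.neg
      · filter_upwards [eventually_gt_atTop (0:ℝ)] with x hx
        simp [Set.mem_compl_iff, Set.mem_singleton_iff]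
        positivity
    have := hslope.comp hcomp
    apply this.congr'
    filter_upwards [eventually_gt_atTop (0:ℝ)] with x hx
    have hx2 : (0:ℝ) < x ^ 2 := by positivity
    simp only [Function.comp_apply, slope_def_field, hg]
    rw [Real.exp_zero]
    field_simp
    ring
  have hupper : Tendsto (fun x : ℝ => g x + 4 * (x ^ 2)⁻¹) atTop (𝓝 1) := by
    have h0 : Tendsto (fun x : ℝ => 4 * (x ^ 2)⁻¹) atTop (𝓝 0) := by
      have : Tendsto (fun x : ℝ => (x ^ 2)⁻¹) atTop (𝓝 0) :=
        (tendsto_pow_atTop (n := 2) two_ne_zero).inv_tendsto_atTop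
      simpa using this.const_mul 4
    simpa using hg1.add h0
  apply tendsto_of_tendsto_of_tendsto_of_le_of_le' hg1 hupper
  · -- g x ≤ x^2 (1 - P)
    filter_upwards [eventually_ge_atTop (2:ℝ)] with x hx
    have hx0 : (0:ℝ) < x := by linarith
    have hx2 : (0:ℝ) < x ^ 2 := by positivity
    set t : ℝ := (x ^ 2)⁻¹ with hts
    have ht : 0 < t := by positivity
    have ht2 : t ≤ 1/2 := by
      rw [hts, inv_le_comm₀ (by positivity) (by norm_num)]
      nlinarith
    have hb := (prod_bounds ht ht2).2
    have : 1 - Real.exp (-t) ≤ 1 - ∏' k : ℕ, H (k + 1) t := by linarith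
    exact mul_le_mul_of_nonneg_left this hx2.le
  · -- x^2 (1 - P) ≤ g x + 4 t
    filter_upwards [eventually_ge_atTop (2:ℝ)] with x hx
    have hx0 : (0:ℝ) < x := by linarith
    have hx2 : (0:ℝ) < x ^ 2 := by positivity
    set t : ℝ := (x ^ 2)⁻¹ with hts
    have ht : 0 < t := by positivity
    have ht2 : t ≤ 1/2 := by
      rw [hts, inv_le_comm₀ (by positivity) (by norm_num)]
      nlinarith
    have hb := (prod_bounds ht ht2).1
    have h1 : 1 - ∏' k : ℕ, H (k + 1) t ≤ (1 - Real.exp (-t)) + 4 * t ^ 2 := by linarith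
    have h2 : x ^ 2 * (1 - ∏' k : ℕ, H (k + 1) t) ≤
        x ^ 2 * ((1 - Real.exp (-t)) + 4 * t ^ 2) := mul_le_mul_of_nonneg_left h1 hx2.le
    have h3 : x ^ 2 * t = 1 := by
      rw [hts]; field_simp
    calc x ^ 2 * (1 - ∏' k : ℕ, H (k + 1) t) ≤ x ^ 2 * ((1 - Real.exp (-t)) + 4 * t ^ 2) := h2
      _ = g x + 4 * t := by
          simp only [hg]
          nlinarith [h3]
end

section
/- For $\alpha > 0$ let $\Phi_\alpha(x) = \prod_{j=0}^\infty \Phi(x + j\sqrt{\alpha})$. Then as $x \to +\infty$, $1 - \Phi_\alpha\big(\tfrac{1}{2}\sqrt{\alpha} + 2\alpha^{-1/2}\log x\big) \sim \frac{\sqrt{\alpha}\, e^{-\alpha/8}}{2\sqrt{2\pi}} \cdot \frac{1}{x \log x} e^{-2(\log x)^2/\alpha}$. -/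
open Filter Topology MeasureTheory

noncomputable def Phi (x : ℝ) : ℝ :=
  ∫ t in Set.Iic x, Real.exp (-t ^ 2 / 2) / Real.sqrt (2 * Real.pi)

open Real Set

noncomputable def gpdf (t : ℝ) : ℝ := Real.exp (-t ^ 2 / 2) / Real.sqrt (2 * Real.pi)

lemma gpdf_pos (t : ℝ) : 0 < gpdf t := by
  apply div_pos (Real.exp_pos _)
  positivity

lemma gpdf_eq (t : ℝ) : gpdf t = Real.exp (-(1/2) * t ^ 2) * (Real.sqrt (2*Real.pi))⁻¹ := by
  rw [gpdf, div_eq_mul_inv]; ring_nf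

lemma integrable_gpdf : Integrable gpdf := by
  have := (integrable_exp_neg_mul_sq (by norm_num : (0:ℝ) < 1/2)).mul_const (Real.sqrt (2*Real.pi))⁻¹
  exact this.congr (by filter_upwards with t using (gpdf_eq t).symm)

lemma integral_gpdf : ∫ t, gpdf t = 1 := by
  simp only [gpdf_eq]
  rw [MeasureTheory.integral_mul_const, integral_gaussian]
  rw [show Real.pi / (1/2) = 2 * Real.pi by ring]
  rw [mul_inv_cancel₀]
  positivity

lemma Phi_eq (x : ℝ) : Phi x = ∫ t in Set.Iic x, gpdf t := rfl

lemma one_sub_Phi (x : ℝ) : 1 - Phi x = ∫ t in Set.Ioi x, gpdf t := by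
  have h := intervalIntegral.integral_Iic_add_Ioi (μ := volume) (b := x)
    integrable_gpdf.integrableOn integrable_gpdf.integrableOn
  rw [integral_gpdf] at h
  rw [Phi_eq]; linarith

lemma Phi_le_one (x : ℝ) : Phi x ≤ 1 := by
  have := one_sub_Phi x
  have h2 : 0 ≤ ∫ t in Set.Ioi x, gpdf t :=
    setIntegral_nonneg measurableSet_Ioi (fun t _ => (gpdf_pos t).le)
  linarith

lemma gpdf_support : Function.support gpdf = Set.univ := by
  ext t; simp [Function.support, (gpdf_pos t).ne']

lemma Phi_pos (x : ℝ) : 0 < Phi x := by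
  rw [Phi_eq]
  rw [setIntegral_pos_iff_support_of_nonneg_ae
    (Filter.Eventually.of_forall fun t => (gpdf_pos t).le) integrable_gpdf.integrableOn]
  rw [gpdf_support, Set.univ_inter]
  simp

lemma hasDerivAt_gpdf (t : ℝ) : HasDerivAt gpdf (-t * gpdf t) t := by
  have h : HasDerivAt (fun t : ℝ => -t ^ 2 / 2) (-t) t := by
    have := ((hasDerivAt_pow 2 t).neg).div_const 2
    exact this.congr_deriv (by norm_num; ring)
  have h2 := (h.exp).div_const (Real.sqrt (2 * Real.pi))
  exact h2.congr_deriv (by unfold gpdf; ring)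

lemma hasDerivAt_mills (t : ℝ) (ht : t ≠ 0) :
    HasDerivAt (fun s => -(gpdf s / s)) (gpdf t * (1 + 1 / t ^ 2)) t := by
  have h := ((hasDerivAt_gpdf t).div (hasDerivAt_id t) ht).neg
  exact h.congr_deriv (by simp only [id]; field_simp; ring)

lemma tendsto_gpdf_atTop : Tendsto gpdf atTop (𝓝 0) := by
  have h1 : Tendsto (fun t : ℝ => -t ^ 2 / 2) atTop atBot := by
    apply Tendsto.atBot_div_const (by norm_num)
    exact tendsto_neg_atTop_atBot.comp (tendsto_pow_atTop two_ne_zero)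
  have h2 : Tendsto (fun t : ℝ => Real.exp (-t ^ 2 / 2)) atTop (𝓝 0) :=
    Real.tendsto_exp_atBot.comp h1
  have h3 := h2.div_const (Real.sqrt (2 * Real.pi))
  rw [zero_div] at h3; exact h3

lemma tendsto_mills_atTop : Tendsto (fun s => -(gpdf s / s)) atTop (𝓝 0) := by
  have h : Tendsto (fun s : ℝ => gpdf s / s) atTop (𝓝 0) := by
    have := tendsto_gpdf_atTop.mul tendsto_inv_atTop_zero
    simpa [div_eq_mul_inv] using this
  simpa using h.neg

lemma integrableOn_millsInt {y : ℝ} (hy : 0 < y) :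
    IntegrableOn (fun t => gpdf t * (1 + 1 / t ^ 2)) (Ioi y) := by
  apply Integrable.mono' (g := fun t => gpdf t * (1 + 1 / y ^ 2))
  · exact (integrable_gpdf.mul_const _).integrableOn
  · apply AEStronglyMeasurable.mul
    · exact integrable_gpdf.aestronglyMeasurable.restrict
    · apply AEStronglyMeasurable.add aestronglyMeasurable_const
      exact (Measurable.div measurable_const (measurable_id.pow_const 2)).aestronglyMeasurable.restrict
  · filter_upwards [ae_restrict_mem measurableSet_Ioi] with t ht
    have hty : y < t := ht
    have h0 : (0:ℝ) < t := hy.trans hty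
    rw [Real.norm_eq_abs, abs_of_nonneg (mul_nonneg (gpdf_pos t).le (by positivity))]
    apply mul_le_mul_of_nonneg_left _ (gpdf_pos t).le
    have : 1 / t ^ 2 ≤ 1 / y ^ 2 := by
      apply one_div_le_one_div_of_le (by positivity)
      exact pow_le_pow_left₀ hy.le hty.le 2
    linarith

lemma integral_mills {y : ℝ} (hy : 0 < y) :
    ∫ t in Ioi y, gpdf t * (1 + 1 / t ^ 2) = gpdf y / y := by
  have h := integral_Ioi_of_hasDerivAt_of_tendsto
    (f := fun s => -(gpdf s / s)) (f' := fun t => gpdf t * (1 + 1 / t ^ 2)) (a := y)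
    ?_ ?_ (integrableOn_millsInt hy) tendsto_mills_atTop
  · rw [h]; ring
  · exact (hasDerivAt_mills y hy.ne').continuousAt.continuousWithinAt
  · exact fun t ht => hasDerivAt_mills t (hy.trans ht).ne'

lemma mills_upper {y : ℝ} (hy : 0 < y) : ∫ t in Ioi y, gpdf t ≤ gpdf y / y := by
  rw [← integral_mills hy]
  apply setIntegral_mono_on integrable_gpdf.integrableOn (integrableOn_millsInt hy)
    measurableSet_Ioi
  intro t ht
  have h0 : (0:ℝ) < t := hy.trans ht
  nlinarith [gpdf_pos t, sq_nonneg t, one_div_pos.mpr (pow_pos h0 2)]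

lemma mills_lower {y : ℝ} (hy : 0 < y) :
    gpdf y / y ≤ (1 + 1 / y ^ 2) * ∫ t in Ioi y, gpdf t := by
  rw [← integral_mills hy, ← integral_const_mul]
  apply setIntegral_mono_on (integrableOn_millsInt hy)
    ((integrable_gpdf.const_mul _).integrableOn) measurableSet_Ioi
  intro t ht
  have h0 : (0:ℝ) < t := hy.trans ht
  have h1 : 1 / t ^ 2 ≤ 1 / y ^ 2 := by
    apply one_div_le_one_div_of_le (by positivity)
    exact pow_le_pow_left₀ hy.le (le_of_lt ht) 2
  nlinarith [gpdf_pos t]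

lemma weierstrass_finset (f : ℕ → ℝ) (h0 : ∀ i, 0 ≤ f i) (h1 : ∀ i, f i ≤ 1)
    (s : Finset ℕ) : 1 - ∑ i ∈ s, (1 - f i) ≤ ∏ i ∈ s, f i := by
  induction s using Finset.induction_on with
  | empty => simp
  | @insert a s hns ih =>
    rw [Finset.prod_insert hns, Finset.sum_insert hns]
    have hle : ∏ i ∈ s, f i ≤ 1 := Finset.prod_le_one (fun i _ => h0 i) (fun i _ => h1 i)
    nlinarith [h0 a, h1 a]

lemma prod_antitone (f : ℕ → ℝ) (h0 : ∀ i, 0 ≤ f i) (h1 : ∀ i, f i ≤ 1) :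
    Antitone (fun s : Finset ℕ => ∏ i ∈ s, f i) := by
  intro s t hst
  simp only
  rw [← Finset.prod_sdiff hst]
  apply mul_le_of_le_one_left (Finset.prod_nonneg fun i _ => h0 i)
  exact Finset.prod_le_one (fun i _ => h0 i) (fun i _ => h1 i)

lemma multipliable_of_le_one (f : ℕ → ℝ) (h0 : ∀ i, 0 ≤ f i) (h1 : ∀ i, f i ≤ 1) :
    Multipliable f := by
  refine ⟨⨅ s : Finset ℕ, ∏ i ∈ s, f i, ?_⟩
  apply tendsto_atTop_ciInf (prod_antitone f h0 h1)
  refine ⟨0, ?_⟩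
  rintro x ⟨s, rfl⟩
  exact Finset.prod_nonneg fun i _ => h0 i

lemma tprod_le_first (f : ℕ → ℝ) (h0 : ∀ i, 0 ≤ f i) (h1 : ∀ i, f i ≤ 1) :
    ∏' i, f i ≤ f 0 := by
  apply le_of_tendsto (multipliable_of_le_one f h0 h1).hasProd
  filter_upwards [Filter.eventually_ge_atTop ({0} : Finset ℕ)] with s hs
  have h0s : (0 : ℕ) ∈ s := hs (Finset.mem_singleton_self 0)
  rw [← Finset.mul_prod_erase s f h0s]
  exact mul_le_of_le_one_right (h0 0) <|
    Finset.prod_le_one (fun i _ => h0 i) (fun i _ => h1 i)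

lemma one_sub_tsum_le_tprod (f : ℕ → ℝ) (h0 : ∀ i, 0 ≤ f i) (h1 : ∀ i, f i ≤ 1)
    (hs : Summable (fun i => 1 - f i)) :
    1 - ∑' i, (1 - f i) ≤ ∏' i, f i := by
  apply ge_of_tendsto (multipliable_of_le_one f h0 h1).hasProd
  filter_upwards with s
  calc 1 - ∑' i, (1 - f i) ≤ 1 - ∑ i ∈ s, (1 - f i) := by
        have := Summable.sum_le_tsum s (fun i _ => by linarith [h1 i]) hs
        linarith
    _ ≤ ∏ i ∈ s, f i := weierstrass_finset f h0 h1 s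

-- decay of the gaussian density under shifts
lemma gpdf_shift_le {y c : ℝ} (hy : 0 < y) (hc : 0 ≤ c) :
    gpdf (y + c) ≤ gpdf y * Real.exp (-(c * y)) := by
  unfold gpdf
  rw [div_mul_eq_mul_div, ← Real.exp_add]
  apply div_le_div_of_nonneg_right _ (by positivity)
  apply Real.exp_le_exp.mpr
  nlinarith

lemma tail_bound {y a : ℝ} (hy : 0 < y) (ha : 0 < a) (j : ℕ) :
    1 - Phi (y + (j + 1 : ℕ) * a) ≤ gpdf y / y * Real.exp (-(a * y)) ^ (j + 1) := by
  set c : ℝ := (j + 1 : ℕ) * a with hc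
  have hc0 : 0 < c := by positivity
  have hyc : 0 < y + c := by linarith
  rw [one_sub_Phi]
  calc ∫ t in Ioi (y + c), gpdf t ≤ gpdf (y + c) / (y + c) := mills_upper hyc
    _ ≤ gpdf (y + c) / y := by
        apply div_le_div_of_nonneg_left (gpdf_pos _).le hy; linarith
    _ ≤ (gpdf y * Real.exp (-(c * y))) / y := by
        gcongr
        exact gpdf_shift_le hy hc0.le
    _ = gpdf y / y * Real.exp (-(a * y)) ^ (j + 1) := by
        rw [← Real.exp_nat_mul]
        rw [hc]
        push_cast
        ring_nf

lemma key_bounds {a y : ℝ} (ha : 0 < a) (hy : 0 < y) :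
    (1 + 1 / y ^ 2)⁻¹ ≤ (1 - ∏' j : ℕ, Phi (y + j * a)) * (y / gpdf y) ∧
    (1 - ∏' j : ℕ, Phi (y + j * a)) * (y / gpdf y) ≤
      1 + Real.exp (-(a * y)) * (1 - Real.exp (-(a * y)))⁻¹ := by
  set f : ℕ → ℝ := fun j => Phi (y + j * a) with hf
  have h0 : ∀ i, 0 ≤ f i := fun i => (Phi_pos _).le
  have h1 : ∀ i, f i ≤ 1 := fun i => Phi_le_one _
  set r : ℝ := Real.exp (-(a * y)) with hrdef
  have hr0 : 0 ≤ r := (Real.exp_pos _).le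
  have hr1 : r < 1 := by
    rw [hrdef, Real.exp_lt_one_iff]; nlinarith
  have hgeo : Summable (fun j : ℕ => gpdf y / y * r ^ (j + 1)) := by
    exact ((summable_nat_add_iff (f := fun j : ℕ => gpdf y / y * r ^ j) 1).mpr
      ((summable_geometric_of_lt_one hr0 hr1).mul_left _))
  have hsum1 : Summable (fun j : ℕ => 1 - f (j + 1)) := by
    apply Summable.of_nonneg_of_le (fun j => by linarith [h1 (j+1)]) _ hgeo
    intro j
    exact tail_bound hy ha j
  have hsum : Summable (fun j : ℕ => 1 - f j) := (summable_nat_add_iff 1).mp hsum1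
  have hf0 : f 0 = Phi y := by simp [hf]
  have hfirst : 1 - f 0 = ∫ t in Ioi y, gpdf t := by rw [hf0, one_sub_Phi]
  have hmu : 1 - f 0 ≤ gpdf y / y := hfirst ▸ mills_upper hy
  have hml : gpdf y / y ≤ (1 + 1 / y ^ 2) * (1 - f 0) := hfirst ▸ mills_lower hy
  have htail : ∑' j : ℕ, (1 - f (j + 1)) ≤ gpdf y / y * (r * (1 - r)⁻¹) := by
    calc ∑' j : ℕ, (1 - f (j + 1)) ≤ ∑' j : ℕ, gpdf y / y * r ^ (j + 1) := by
          apply Summable.tsum_le_tsum _ hsum1 hgeo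
          intro j; exact tail_bound hy ha j
      _ = gpdf y / y * (r * (1 - r)⁻¹) := by
          have : ∀ j : ℕ, gpdf y / y * r ^ (j + 1) = (gpdf y / y * r) * r ^ j := by
            intro j; rw [pow_succ]; ring
          simp_rw [this]
          rw [tsum_mul_left, tsum_geometric_of_lt_one hr0 hr1]
          ring
  have hP_le : ∏' j, f j ≤ f 0 := tprod_le_first f h0 h1
  have hP_ge : 1 - ∑' j, (1 - f j) ≤ ∏' j, f j := one_sub_tsum_le_tprod f h0 h1 hsum
  have hsplit : ∑' j : ℕ, (1 - f j) = (1 - f 0) + ∑' j : ℕ, (1 - f (j + 1)) :=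
    Summable.tsum_eq_zero_add hsum
  have hyg : 0 < y / gpdf y := div_pos hy (gpdf_pos y)
  have hgy : gpdf y / y * (y / gpdf y) = 1 := by
    field_simp
    exact div_self (gpdf_pos y).ne'
  constructor
  · have hlow : gpdf y / y * (1 + 1 / y ^ 2)⁻¹ ≤ 1 - ∏' j, f j := by
      have h2 : (0:ℝ) < 1 + 1 / y ^ 2 := by positivity
      have hml2 : gpdf y / y ≤ (1 - f 0) * (1 + 1 / y ^ 2) := by rwa [mul_comm] at hml
      have h3 : gpdf y / y / (1 + 1 / y ^ 2) ≤ 1 - f 0 := (div_le_iff₀ h2).mpr hml2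
      have h4 : 1 - f 0 ≤ 1 - ∏' j, f j := by linarith
      calc gpdf y / y * (1 + 1 / y ^ 2)⁻¹ = gpdf y / y / (1 + 1 / y ^ 2) :=
            (div_eq_mul_inv _ _).symm
        _ ≤ _ := le_trans h3 h4
    calc (1 + 1 / y ^ 2)⁻¹ = gpdf y / y * (1 + 1 / y ^ 2)⁻¹ * (y / gpdf y) := by
          rw [mul_comm (gpdf y / y), mul_assoc, hgy, mul_one]
      _ ≤ (1 - ∏' j, f j) * (y / gpdf y) := by
          exact mul_le_mul_of_nonneg_right hlow hyg.le
  · have hup : 1 - ∏' j, f j ≤ gpdf y / y * (1 + r * (1 - r)⁻¹) := by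
      have : 1 - ∏' j, f j ≤ ∑' j : ℕ, (1 - f j) := by linarith [hP_ge]
      rw [hsplit] at this
      calc 1 - ∏' j, f j ≤ (1 - f 0) + ∑' j : ℕ, (1 - f (j + 1)) := this
        _ ≤ gpdf y / y + gpdf y / y * (r * (1 - r)⁻¹) := add_le_add hmu htail
        _ = gpdf y / y * (1 + r * (1 - r)⁻¹) := by ring
    calc (1 - ∏' j, f j) * (y / gpdf y)
        ≤ gpdf y / y * (1 + r * (1 - r)⁻¹) * (y / gpdf y) :=
          mul_le_mul_of_nonneg_right hup hyg.le
      _ = 1 + r * (1 - r)⁻¹ := by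
          rw [mul_comm (gpdf y / y), mul_assoc, hgy, mul_one]

lemma key_tendsto (a : ℝ) (ha : 0 < a) :
    Tendsto (fun y : ℝ => (1 - ∏' j : ℕ, Phi (y + j * a)) * (y / gpdf y))
      atTop (𝓝 1) := by
  apply tendsto_of_tendsto_of_tendsto_of_le_of_le'
    (g := fun y : ℝ => (1 + 1 / y ^ 2)⁻¹)
    (h := fun y : ℝ => 1 + Real.exp (-(a * y)) * (1 - Real.exp (-(a * y)))⁻¹)
  · have h0 : Tendsto (fun y : ℝ => y ^ 2) atTop atTop :=
      tendsto_pow_atTop (by norm_num)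
    have h1 : Tendsto (fun y : ℝ => 1 / y ^ 2) atTop (𝓝 0) := by
      rw [show (fun y : ℝ => 1 / y ^ 2) = (fun y => y ^ 2)⁻¹ by ext; simp]; exact h0.inv_tendsto_atTop
    have := (tendsto_const_nhds.add h1).inv₀ (by norm_num : (1:ℝ) + 0 ≠ 0)
    simpa using this
  · have hr : Tendsto (fun y : ℝ => Real.exp (-(a * y))) atTop (𝓝 0) := by
      apply Real.tendsto_exp_atBot.comp
      apply tendsto_neg_atTop_atBot.comp
      exact (tendsto_id.const_mul_atTop ha)
    have h2 : Tendsto (fun y : ℝ => (1 - Real.exp (-(a * y)))⁻¹) atTop (𝓝 1) := by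
      have := (tendsto_const_nhds.sub hr).inv₀ (by norm_num : (1:ℝ) - 0 ≠ 0)
      simpa using this
    have h3 := (tendsto_const_nhds (x := (1:ℝ))).add (hr.mul h2)
    simpa using h3
  · filter_upwards [eventually_gt_atTop 0] with y hy
    exact (key_bounds ha hy).1
  · filter_upwards [eventually_gt_atTop 0] with y hy
    exact (key_bounds ha hy).2

theorem stmt_18 (α : ℝ) (hα : 0 < α) :
    Tendsto
      (fun x : ℝ =>
        (1 - ∏' j : ℕ,
            Phi (Real.sqrt α / 2 + 2 * Real.log x / Real.sqrt α + j * Real.sqrt α)) /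
          (Real.sqrt α * Real.exp (-α / 8) / (2 * Real.sqrt (2 * Real.pi)) *
            (1 / (x * Real.log x)) * Real.exp (-2 * Real.log x ^ 2 / α)))
      atTop (𝓝 1) := by
  have hs : 0 < Real.sqrt α := Real.sqrt_pos.mpr hα
  have hs2 : Real.sqrt α ^ 2 = α := Real.sq_sqrt hα.le
  -- the inner scale y(x)
  set Y : ℝ → ℝ := fun x => Real.sqrt α / 2 + 2 * Real.log x / Real.sqrt α with hY
  have hYtop : Tendsto Y atTop atTop := by
    apply tendsto_atTop_add_const_left
    apply Tendsto.atTop_div_const hs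
    exact Real.tendsto_log_atTop.const_mul_atTop (by norm_num)
  -- Q ∘ Y tends to 1
  have hQ := (key_tendsto (Real.sqrt α) hs).comp hYtop
  -- the correction factor tends to 1
  have hc : Tendsto (fun x : ℝ => 2 * Real.log x / (α / 2 + 2 * Real.log x))
      atTop (𝓝 1) := by
    have hd : Tendsto (fun x : ℝ => α / 2 + 2 * Real.log x) atTop atTop := by
      apply tendsto_atTop_add_const_left
      exact Real.tendsto_log_atTop.const_mul_atTop (by norm_num)
    have h0 : Tendsto (fun x : ℝ => (α / 2) / (α / 2 + 2 * Real.log x)) atTop (𝓝 0) :=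
      Tendsto.div_atTop tendsto_const_nhds hd
    have h1 := (tendsto_const_nhds (x := (1:ℝ))).sub h0
    rw [sub_zero] at h1
    apply h1.congr'
    filter_upwards [eventually_gt_atTop 1] with x hx
    have hL : 0 < Real.log x := Real.log_pos hx
    have hne : α / 2 + 2 * Real.log x ≠ 0 := by positivity
    field_simp
    ring
  have hmul := hQ.mul hc
  rw [mul_one] at hmul
  apply hmul.congr'
  filter_upwards [eventually_gt_atTop 1] with x hx
  have hx0 : 0 < x := lt_trans one_pos hx
  have hL : 0 < Real.log x := Real.log_pos hx
  set L := Real.log x with hLdef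
  set s := Real.sqrt α with hsdef
  have hy : 0 < Y x := by
    rw [hY]; positivity
  have hsy : s * Y x = α / 2 + 2 * L := by
    rw [hY, ← hs2]
    field_simp
    ring
  -- the gaussian density at Y x
  have hgy : gpdf (Y x) = Real.exp (-α / 8) * x⁻¹ * Real.exp (-2 * L ^ 2 / α) /
      Real.sqrt (2 * Real.pi) := by
    rw [gpdf]
    congr 1
    rw [← Real.exp_log hx0, ← Real.exp_neg, ← Real.exp_add, ← Real.exp_add]
    congr 1
    rw [hY, ← hs2]
    field_simp
    simp only [Real.log_exp, hLdef]
    ring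
  -- now the algebraic identity
  have hSpos : 0 < Real.sqrt (2 * Real.pi) := Real.sqrt_pos.mpr (by positivity)
  have h4 : α / 2 + 2 * L ≠ 0 := by positivity
  have hone : (s * Real.exp (-α / 8) / (2 * Real.sqrt (2 * Real.pi)) *
      (1 / (x * L)) * Real.exp (-2 * L ^ 2 / α)) *
      ((Y x / gpdf (Y x)) * (2 * L / (α / 2 + 2 * L))) = 1 := by
    rw [hgy]
    have h1 : Real.exp (-α / 8) ≠ 0 := Real.exp_ne_zero _
    have h2 : Real.exp (-2 * L ^ 2 / α) ≠ 0 := Real.exp_ne_zero _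
    have h3 : Real.sqrt (2 * Real.pi) ≠ 0 := hSpos.ne'
    rw [hY, ← hs2]
    field_simp
    ring
  have hDinv : (Y x / gpdf (Y x)) * (2 * L / (α / 2 + 2 * L)) =
      (s * Real.exp (-α / 8) / (2 * Real.sqrt (2 * Real.pi)) *
        (1 / (x * L)) * Real.exp (-2 * L ^ 2 / α))⁻¹ :=
    eq_inv_of_mul_eq_one_left (by rw [mul_comm] at hone; exact hone)
  show (1 - ∏' j : ℕ, Phi (Y x + ↑j * s)) * (Y x / gpdf (Y x)) * (2 * L / (α / 2 + 2 * L)) =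
      (1 - ∏' j : ℕ, Phi (Y x + ↑j * s)) /
        (s * Real.exp (-α / 8) / (2 * Real.sqrt (2 * Real.pi)) *
          (1 / (x * L)) * Real.exp (-2 * L ^ 2 / α))
  rw [mul_assoc, hDinv, ← div_eq_mul_inv]
end
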